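/- Fix r > 0 and suppose (x_i, ε_i), i = 1,...,n, are independent pairs where x_i ∈ ℝ^d has a distribution absolutely continuous with respect to Lebesgue measure, ε_i ∈ ℝ is independent of x_i with a density symmetric about 0 and strictly unimodal (strictly decreasing on [0,∞) near 0), and y_i = x_iᵀβ* + ε_i. Then β* is the unique maximizer over β ∈ ℝ^d of F(β) = Σ_{i=1}^n P(|y_i − x_iᵀβ| ≤ r). -/

import Mathlib

open MeasureTheory ProbabilityTheory
open scoped ENNReal

section Aux

/-- Reflection `t ↦ a - t` preserves set-lintegrals over the image set. -/
lemma reflect_setLIntegral (f : ℝ → ℝ≥0∞) (a : ℝ) (S : Set ℝ) :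
    ∫⁻ t in S, f (a - t) = ∫⁻ t in (fun t => a - t) '' S, f t :=
  (Measure.measurePreserving_sub_left volume a).setLIntegral_comp_emb
    (Homeomorph.subLeft a).measurableEmbedding f S

lemma key_pos {g : ℝ → ℝ} (hmeas : Measurable g)
    (hsymm : ∀ t, g (-t) = g t) (hanti : StrictAntiOn g (Set.Ici 0))
    (hpos : ∀ t, 0 < g t)
    (hfin : ∫⁻ t, ENNReal.ofReal (g t) ≠ ⊤) {r c : ℝ} (hr : 0 < r) (hc : 0 < c) :
    ∫⁻ t in Set.Icc (c - r) (c + r), ENNReal.ofReal (g t) <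
      ∫⁻ t in Set.Icc (-r) r, ENNReal.ofReal (g t) := by
  set f : ℝ → ℝ≥0∞ := fun t => ENNReal.ofReal (g t) with hf
  have hfmeas : Measurable f := hmeas.ennreal_ofReal
  set B : Set ℝ := Set.Icc (-r) r with hB
  set S : Set ℝ := B ∩ Set.Ici (c - r) with hSdef
  set T : Set ℝ := B ∩ Set.Iio (c - r) with hTdef
  have hBmeas : MeasurableSet B := measurableSet_Icc
  have hTmeas : MeasurableSet T := hBmeas.inter measurableSet_Iio
  have hSmeas : MeasurableSet S := hBmeas.inter measurableSet_Ici
  have hunion : S ∪ T = B := by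
    rw [hSdef, hTdef, ← Set.inter_union_distrib_left, Set.union_comm,
      Set.Iio_union_Ici, Set.inter_univ]
  have hdisj : Disjoint S T := by
    apply Set.disjoint_left.mpr
    rintro t ⟨-, h1⟩ ⟨-, h2⟩
    exact absurd (Set.mem_Iio.mp h2) (not_lt.mpr h1)
  -- S as an interval
  have hSIcc : S = Set.Icc (c - r) r := by
    ext t
    simp only [hSdef, hB, Set.mem_inter_iff, Set.mem_Icc, Set.mem_Ici]
    constructor
    · rintro ⟨⟨-, h2⟩, h3⟩; exact ⟨h3, h2⟩
    · rintro ⟨h1, h2⟩; exact ⟨⟨by linarith, h2⟩, h1⟩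
  -- reflection identities
  have href_B : ∫⁻ t in B, f (c - t) = ∫⁻ t in Set.Icc (c - r) (c + r), f t := by
    rw [reflect_setLIntegral f c B, hB, Set.image_const_sub_Icc]
    norm_num [sub_neg_eq_add]
  have href_S : ∫⁻ t in S, f (c - t) = ∫⁻ t in S, f t := by
    rw [reflect_setLIntegral f c S, hSIcc, Set.image_const_sub_Icc]
    ring_nf
  -- splitting
  have hsplit1 : ∫⁻ t in B, f (c - t) = (∫⁻ t in S, f (c - t)) + ∫⁻ t in T, f (c - t) := by
    rw [← hunion, lintegral_union hTmeas hdisj]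
  have hsplit2 : ∫⁻ t in B, f t = (∫⁻ t in S, f t) + ∫⁻ t in T, f t := by
    rw [← hunion, lintegral_union hTmeas hdisj]
  -- strict inequality on T
  have hT0 : volume T ≠ 0 := by
    have hsub : Set.Ioo (-r) (min (c - r) r) ⊆ T := by
      intro t ht
      rcases ht with ⟨h1, h2⟩
      rcases lt_min_iff.mp h2 with ⟨h3, h4⟩
      exact ⟨⟨le_of_lt h1, le_of_lt h4⟩, h3⟩
    have hlt : (0 : ℝ≥0∞) < volume (Set.Ioo (-r) (min (c - r) r)) := by
      rw [Real.volume_Ioo]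
      apply ENNReal.ofReal_pos.mpr
      have h1 : -r < c - r := by linarith
      have h2 : -r < r := by linarith
      have := lt_min h1 h2
      linarith [lt_min h1 h2]
    exact fun h0 => (lt_of_lt_of_le hlt (measure_mono hsub)).ne' h0
  have hfiT : ∫⁻ t in T, f (c - t) ≠ ⊤ := by
    have h1 : ∫⁻ t in T, f (c - t) ≤ ∫⁻ t, f (c - t) :=
      setLIntegral_le_lintegral T _
    have h2 : ∫⁻ t, f (c - t) = ∫⁻ t, f t :=
      (Measure.measurePreserving_sub_left volume c).lintegral_comp hfmeas
    intro h
    exact hfin (by rw [← h2]; exact eq_top_iff.mpr (h ▸ h1))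
  have hTlt : ∫⁻ t in T, f (c - t) < ∫⁻ t in T, f t := by
    apply setLIntegral_strict_mono hTmeas hT0 hfmeas hfiT
    filter_upwards with t ht
    rcases ht with ⟨⟨h1, h2⟩, h3⟩
    rw [Set.mem_Iio] at h3
    have habs : |t| ≤ r := abs_le.mpr ⟨h1, h2⟩
    have hct : r < c - t := by linarith
    have hgt : g t = g |t| := by
      rcases abs_cases t with ⟨h, -⟩ | ⟨h, -⟩
      · rw [h]
      · rw [h, hsymm]
    have hglt : g (c - t) < g |t| :=
      hanti (Set.mem_Ici.mpr (abs_nonneg t)) (Set.mem_Ici.mpr (by linarith)) (lt_of_le_of_lt habs hct)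
    rw [hf]
    exact ENNReal.ofReal_lt_ofReal_iff (hgt ▸ hpos |t|) |>.mpr (hgt ▸ hglt)
  have hfiS : ∫⁻ t in S, f t ≠ ⊤ :=
    fun h => hfin (le_antisymm le_top (h ▸ setLIntegral_le_lintegral S f))
  calc ∫⁻ t in Set.Icc (c - r) (c + r), f t
      = ∫⁻ t in B, f (c - t) := href_B.symm
    _ = (∫⁻ t in S, f (c - t)) + ∫⁻ t in T, f (c - t) := hsplit1
    _ = (∫⁻ t in S, f t) + ∫⁻ t in T, f (c - t) := by rw [href_S]
    _ < (∫⁻ t in S, f t) + ∫⁻ t in T, f t := ENNReal.add_lt_add_left hfiS hTlt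
    _ = ∫⁻ t in B, f t := hsplit2.symm

lemma key_lt {g : ℝ → ℝ} (hmeas : Measurable g) (hnn : ∀ t, 0 ≤ g t)
    (hsymm : ∀ t, g (-t) = g t) (hanti : StrictAntiOn g (Set.Ici 0))
    (hfin : ∫⁻ t, ENNReal.ofReal (g t) ≠ ⊤) {r c : ℝ} (hr : 0 < r) (hc : c ≠ 0) :
    ∫⁻ t in Set.Icc (c - r) (c + r), ENNReal.ofReal (g t) <
      ∫⁻ t in Set.Icc (-r) r, ENNReal.ofReal (g t) := by
  have hpos : ∀ t, 0 < g t := by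
    intro t
    have h1 : g |t| > g (|t| + 1) := hanti (Set.mem_Ici.mpr (abs_nonneg t)) (Set.mem_Ici.mpr (by positivity)) (by linarith)
    have h2 : g t = g |t| := by
      rcases abs_cases t with ⟨h, -⟩ | ⟨h, -⟩
      · rw [h]
      · rw [h, hsymm]
    rw [h2]
    exact lt_of_le_of_lt (hnn (|t| + 1)) h1
  rcases hc.lt_or_gt with hneg | hpos'
  · have hrefl : ∫⁻ t in Set.Icc (-c - r) (-c + r), ENNReal.ofReal (g (0 - t))
        = ∫⁻ t in Set.Icc (c - r) (c + r), ENNReal.ofReal (g t) := by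
      rw [reflect_setLIntegral (fun t => ENNReal.ofReal (g t)) 0 _, Set.image_const_sub_Icc]
      ring_nf
    have heq : ∫⁻ t in Set.Icc (-c - r) (-c + r), ENNReal.ofReal (g (0 - t))
        = ∫⁻ t in Set.Icc (-c - r) (-c + r), ENNReal.ofReal (g t) := by
      apply lintegral_congr
      intro t
      rw [zero_sub, hsymm]
    rw [← hrefl, heq]
    exact key_pos hmeas hsymm hanti hpos hfin hr (by linarith)
  · exact key_pos hmeas hsymm hanti hpos hfin hr hpos'

/-- Core probabilistic step: adding an a.s. nonzero independent shift strictly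
decreases the probability of landing in the centered window. -/
lemma term_lt {d : ℕ} {Ω : Type*} [MeasurableSpace Ω] (Pr : Measure Ω)
    [IsProbabilityMeasure Pr] {r : ℝ} (hr : 0 < r)
    (x : Ω → EuclideanSpace ℝ (Fin d)) (ε : Ω → ℝ)
    (hx : Measurable x) (hε : Measurable ε) (hind : IndepFun x ε Pr)
    (hac : Measure.map x Pr ≪ (volume : Measure (EuclideanSpace ℝ (Fin d))))
    (g : ℝ → ℝ) (hgm : Measurable g) (hgnn : ∀ t, 0 ≤ g t)
    (hdens : Measure.map ε Pr = volume.withDensity (fun t => ENNReal.ofReal (g t)))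
    (hsymm : ∀ t, g (-t) = g t) (hanti : StrictAntiOn g (Set.Ici 0))
    (Δ : EuclideanSpace ℝ (Fin d)) (hΔ : Δ ≠ 0) :
    Pr {ω | |ε ω + (inner ℝ (x ω) Δ : ℝ)| ≤ r} < Pr {ω | |ε ω| ≤ r} := by
  haveI : IsProbabilityMeasure (Measure.map x Pr) := Measure.isProbabilityMeasure_map hx.aemeasurable
  haveI : IsProbabilityMeasure (Measure.map ε Pr) := Measure.isProbabilityMeasure_map hε.aemeasurable
  set f : ℝ → ℝ≥0∞ := fun t => ENNReal.ofReal (g t) with hf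
  have hfmeas : Measurable f := hgm.ennreal_ofReal
  have hfin : ∫⁻ t, f t ≠ ⊤ := by
    have h1 : (volume.withDensity f) Set.univ = 1 := by
      rw [← hdens]; exact measure_univ
    rw [withDensity_apply f MeasurableSet.univ, Measure.restrict_univ] at h1
    rw [h1]
    exact ENNReal.one_ne_top
  -- the event set in product space
  set S : Set (EuclideanSpace ℝ (Fin d) × ℝ) := {p | |p.2 + (inner ℝ p.1 Δ : ℝ)| ≤ r} with hSdef
  have hcont : Continuous fun p : EuclideanSpace ℝ (Fin d) × ℝ =>
      |p.2 + (inner ℝ p.1 Δ : ℝ)| :=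
    (continuous_snd.add (continuous_fst.inner continuous_const)).abs
  have hS : MeasurableSet S := hcont.measurable measurableSet_Iic
  have hmap : Measure.map (fun ω => (x ω, ε ω)) Pr
      = (Measure.map x Pr).prod (Measure.map ε Pr) :=
    (indepFun_iff_map_prod_eq_prod_map_map hx.aemeasurable hε.aemeasurable).mp hind
  have h1 : Pr {ω | |ε ω + (inner ℝ (x ω) Δ : ℝ)| ≤ r}
      = ((Measure.map x Pr).prod (Measure.map ε Pr)) S := by
    rw [← hmap, Measure.map_apply (hx.prodMk hε) hS]
    rfl
  have h2 : ((Measure.map x Pr).prod (Measure.map ε Pr)) S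
      = ∫⁻ v, Measure.map ε Pr (Prod.mk v ⁻¹' S) ∂(Measure.map x Pr) :=
    Measure.prod_apply hS
  have hsect : ∀ v : EuclideanSpace ℝ (Fin d), Prod.mk v ⁻¹' S
      = Set.Icc (-(inner ℝ v Δ : ℝ) - r) (-(inner ℝ v Δ : ℝ) + r) := by
    intro v
    ext t
    simp only [hSdef, Set.mem_preimage, Set.mem_setOf_eq, Set.mem_Icc, abs_le]
    constructor
    · rintro ⟨ha, hb⟩; constructor <;> linarith
    · rintro ⟨ha, hb⟩; constructor <;> linarith
  have habs_set : {t : ℝ | |t| ≤ r} = Set.Icc (-r) r := by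
    ext t; simp [abs_le]
  have hνIcc : ∀ a b : ℝ, Measure.map ε Pr (Set.Icc a b) = ∫⁻ t in Set.Icc a b, f t := by
    intro a b
    rw [hdens, withDensity_apply f measurableSet_Icc]
  have hright : Pr {ω | |ε ω| ≤ r} = Measure.map ε Pr {t : ℝ | |t| ≤ r} := by
    rw [Measure.map_apply hε (by rw [habs_set]; exact measurableSet_Icc)]
    rfl
  -- the hyperplane has measure zero
  have hnull : Measure.map x Pr {v : EuclideanSpace ℝ (Fin d) | (inner ℝ v Δ : ℝ) = 0} = 0 := by
    apply hac
    set K : Submodule ℝ (EuclideanSpace ℝ (Fin d)) := LinearMap.ker (innerSL ℝ Δ : EuclideanSpace ℝ (Fin d) →ₗ[ℝ] ℝ) with hK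
    have hKne : K ≠ ⊤ := by
      intro htop
      apply hΔ
      have hmem : Δ ∈ K := htop ▸ Submodule.mem_top
      rw [hK, LinearMap.mem_ker] at hmem
      have h0 : (inner ℝ Δ Δ : ℝ) = 0 := hmem
      exact inner_self_eq_zero.mp h0
    have hset : {v : EuclideanSpace ℝ (Fin d) | (inner ℝ v Δ : ℝ) = 0} = (K : Set _) := by
      ext v
      simp only [Set.mem_setOf_eq, hK, SetLike.mem_coe, LinearMap.mem_ker]
      rw [real_inner_comm]
      simp [innerSL_apply_apply]
    rw [hset]
    exact Measure.addHaar_submodule volume K hKne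
  have hae : ∀ᵐ v ∂(Measure.map x Pr), (inner ℝ v Δ : ℝ) ≠ 0 := by
    rw [ae_iff]
    simpa using hnull
  -- strict inequality of the lintegral against the constant
  have hle : ∫⁻ v, Measure.map ε Pr (Prod.mk v ⁻¹' S) ∂(Measure.map x Pr)
      < ∫⁻ _, Measure.map ε Pr {t : ℝ | |t| ≤ r} ∂(Measure.map x Pr) := by
    apply lintegral_strict_mono (IsProbabilityMeasure.ne_zero (Measure.map x Pr))
      aemeasurable_const
    · rw [← h2]; exact measure_ne_top _ _
    · filter_upwards [hae] with v hv
      rw [hsect v, hνIcc, habs_set, hνIcc]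
      have he : (-(inner ℝ v Δ : ℝ) - r) = (-(inner ℝ v Δ : ℝ)) - r := by ring
      rw [he]
      exact key_lt hgm hgnn hsymm hanti hfin hr (neg_ne_zero.mpr hv)
  have hconst : ∫⁻ _, Measure.map ε Pr {t : ℝ | |t| ≤ r} ∂(Measure.map x Pr)
      = Measure.map ε Pr {t : ℝ | |t| ≤ r} := by
    rw [lintegral_const, measure_univ, mul_one]
  calc Pr {ω | |ε ω + (inner ℝ (x ω) Δ : ℝ)| ≤ r}
      = ∫⁻ v, Measure.map ε Pr (Prod.mk v ⁻¹' S) ∂(Measure.map x Pr) := by rw [h1, h2]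
    _ < ∫⁻ _, Measure.map ε Pr {t : ℝ | |t| ≤ r} ∂(Measure.map x Pr) := hle
    _ = Pr {ω | |ε ω| ≤ r} := by rw [hconst, ← hright]

end Aux

/-- In the linear model `y_i = ⟪x_i, β*⟫ + ε_i`, with `x_i` absolutely
continuous, `ε_i ⟂ x_i` having a density symmetric about `0` and strictly
decreasing on `[0,∞)`, the true parameter `β*` is the unique maximizer of
`F(β) = ∑ P(|y_i − ⟪x_i, β⟫| ≤ r)`. -/
theorem regression_population_maximizer
    {Ω : Type*} [MeasurableSpace Ω] (Pr : Measure Ω) [IsProbabilityMeasure Pr]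
    (n d : ℕ) (hn : 1 ≤ n) (r : ℝ) (hr : 0 < r)
    (x : Fin n → Ω → EuclideanSpace ℝ (Fin d)) (ε : Fin n → Ω → ℝ)
    (hx_meas : ∀ i, Measurable (x i)) (hε_meas : ∀ i, Measurable (ε i))
    (hindep_pairs : iIndepFun
      (fun i ω => (x i ω, ε i ω)) Pr)
    (hxε_indep : ∀ i, IndepFun (x i) (ε i) Pr)
    (hx_ac : ∀ i, Measure.map (x i) Pr ≪ (volume : Measure (EuclideanSpace ℝ (Fin d))))
    (g : Fin n → ℝ → ℝ) (hg_meas : ∀ i, Measurable (g i))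
    (hg_nonneg : ∀ i t, 0 ≤ g i t)
    (hg_dens : ∀ i, Measure.map (ε i) Pr
      = volume.withDensity (fun t => ENNReal.ofReal (g i t)))
    (hg_symm : ∀ i t, g i (-t) = g i t)
    (hg_anti : ∀ i, StrictAntiOn (g i) (Set.Ici 0))
    (βstar : EuclideanSpace ℝ (Fin d))
    (y : Fin n → Ω → ℝ)
    (hy : ∀ i ω, y i ω = (inner ℝ (x i ω) βstar : ℝ) + ε i ω) :
    ∀ β : EuclideanSpace ℝ (Fin d), β ≠ βstar →
      ∑ i, (Pr {ω | |y i ω - (inner ℝ (x i ω) β : ℝ)| ≤ r}).toReal <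
        ∑ i, (Pr {ω | |y i ω - (inner ℝ (x i ω) βstar : ℝ)| ≤ r}).toReal := by
  intro β hβ
  have hΔ : βstar - β ≠ 0 := sub_ne_zero_of_ne (Ne.symm hβ)
  haveI : Nonempty (Fin n) := ⟨⟨0, hn⟩⟩
  apply Finset.sum_lt_sum_of_nonempty Finset.univ_nonempty
  intro i _
  have e1 : {ω | |y i ω - (inner ℝ (x i ω) β : ℝ)| ≤ r}
      = {ω | |ε i ω + (inner ℝ (x i ω) (βstar - β) : ℝ)| ≤ r} := by
    ext ω
    have : y i ω - (inner ℝ (x i ω) β : ℝ)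
        = ε i ω + (inner ℝ (x i ω) (βstar - β) : ℝ) := by
      rw [hy i ω, inner_sub_right]; ring
    simp only [Set.mem_setOf_eq, this]
  have e2 : {ω | |y i ω - (inner ℝ (x i ω) βstar : ℝ)| ≤ r} = {ω | |ε i ω| ≤ r} := by
    ext ω
    have : y i ω - (inner ℝ (x i ω) βstar : ℝ) = ε i ω := by
      rw [hy i ω]; ring
    simp only [Set.mem_setOf_eq, this]
  rw [e1, e2]
  apply (ENNReal.toReal_lt_toReal (measure_ne_top _ _) (measure_ne_top _ _)).mpr
  exact term_lt Pr hr (x i) (ε i) (hx_meas i) (hε_meas i) (hxε_indep i) (hx_ac i)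
    (g i) (hg_meas i) (hg_nonneg i) (hg_dens i) (hg_symm i) (hg_anti i)
    (βstar - β) hΔ
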